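/- If R is right small injective and right Kasch, then for k ∈ R, Rk is a minimal left ideal if and only if kR is a minimal right ideal; in particular the left socle equals the right socle. -/

import Mathlib

/-- A right ideal `I` of `R` (viewed as a submodule of `R` over `Rᵐᵒᵖ`) is small if
`I + K ≠ R` for every proper right ideal `K`. -/
def IsSmallRightIdeal {R : Type*} [Ring R] (I : Submodule Rᵐᵒᵖ R) : Prop :=
  ∀ K : Submodule Rᵐᵒᵖ R, I ⊔ K = ⊤ → K = ⊤

/-- A right `R`-module `M` is small injective if every `R`-homomorphism from a small right
ideal of `R` to `M` extends to a homomorphism `R → M`. -/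
def SmallInjective (R : Type*) [Ring R] (M : Type*) [AddCommGroup M] [Module Rᵐᵒᵖ M] : Prop :=
  ∀ I : Submodule Rᵐᵒᵖ R, IsSmallRightIdeal I → ∀ f : I →ₗ[Rᵐᵒᵖ] M,
    ∃ g : R →ₗ[Rᵐᵒᵖ] M, ∀ x : I, g x = f x


/-- `R` is right Kasch if every simple right `R`-module embeds in `R` as a right module. -/
def RightKasch (R : Type u) [Ring R] : Prop :=
  ∀ (M : Type u) [AddCommGroup M] [Module Rᵐᵒᵖ M], IsSimpleModule Rᵐᵒᵖ M →
    ∃ f : M →ₗ[Rᵐᵒᵖ] R, Function.Injective f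

section Aux

open Submodule MulOpposite

variable {R : Type u} [Ring R]

/-- Elementwise criterion for a cyclic submodule to be an atom. -/
lemma isAtom_span_singleton_iff {S : Type v} {M : Type w} [Ring S] [AddCommGroup M]
    [Module S M] {k : M} :
    IsAtom (Submodule.span S ({k} : Set M)) ↔
      k ≠ 0 ∧ ∀ a : S, a • k ≠ 0 → ∃ b : S, b • (a • k) = k := by
  constructor
  · rintro ⟨hne, hmin⟩
    have hk : k ≠ 0 := fun h => hne (by simp [h])
    refine ⟨hk, fun a ha => ?_⟩
    have hmem : a • k ∈ Submodule.span S ({k} : Set M) :=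
      Submodule.smul_mem _ a (Submodule.mem_span_singleton_self k)
    have hle : Submodule.span S ({a • k} : Set M) ≤ Submodule.span S ({k} : Set M) := by
      rwa [Submodule.span_le, Set.singleton_subset_iff]
    have heq : Submodule.span S ({a • k} : Set M) = Submodule.span S ({k} : Set M) := by
      rcases hle.lt_or_eq with hlt | he
      · exact absurd (hmin _ hlt) (by simpa [Submodule.span_singleton_eq_bot] using ha)
      · exact he
    have : k ∈ Submodule.span S ({a • k} : Set M) :=
      heq ▸ Submodule.mem_span_singleton_self k
    exact Submodule.mem_span_singleton.1 this
  · rintro ⟨hk, hmin⟩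
    constructor
    · simpa [Submodule.span_singleton_eq_bot] using hk
    · intro J hJ
      by_contra hJne
      obtain ⟨x, hxJ, hx0⟩ := (Submodule.ne_bot_iff J).1 hJne
      have hxk : x ∈ Submodule.span S ({k} : Set M) := hJ.le hxJ
      obtain ⟨a, ha⟩ := Submodule.mem_span_singleton.1 hxk
      obtain ⟨b, hb⟩ := hmin a (by rwa [ha])
      have hkJ : k ∈ J := by
        rw [← hb, ha]
        exact Submodule.smul_mem _ b hxJ
      have : Submodule.span S ({k} : Set M) ≤ J := by
        rwa [Submodule.span_le, Set.singleton_subset_iff]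
      exact absurd (lt_of_le_of_lt this hJ) (lt_irrefl _)

/-- Elementwise criterion for `kR` minimal. -/
lemma rAtom_iff {k : R} :
    IsAtom (Submodule.span Rᵐᵒᵖ ({k} : Set R)) ↔
      k ≠ 0 ∧ ∀ r : R, k * r ≠ 0 → ∃ s : R, k * r * s = k := by
  rw [isAtom_span_singleton_iff]
  refine and_congr Iff.rfl ?_
  constructor
  · intro h r hr
    obtain ⟨b, hb⟩ := h (op r) (by simpa [op_smul_eq_mul] using hr)
    exact ⟨unop b, by simpa [op_smul_eq_mul, MulOpposite.smul_eq_mul_unop] using hb⟩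
  · intro h a ha
    obtain ⟨s, hs⟩ := h (unop a) (by simpa [MulOpposite.smul_eq_mul_unop] using ha)
    exact ⟨op s, by simpa [op_smul_eq_mul, MulOpposite.smul_eq_mul_unop] using hs⟩

/-- Elementwise criterion for `Rk` minimal. -/
lemma lAtom_iff {k : R} :
    IsAtom (Submodule.span R ({k} : Set R)) ↔
      k ≠ 0 ∧ ∀ a : R, a * k ≠ 0 → ∃ b : R, b * (a * k) = k := by
  rw [isAtom_span_singleton_iff]
  simp [smul_eq_mul]

/-- Left multiplication as a map of right modules. -/
def lmulHom (p : R) : R →ₗ[Rᵐᵒᵖ] R where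
  toFun x := p * x
  map_add' := mul_add p
  map_smul' r x := by
    simp only [MulOpposite.smul_eq_mul_unop, RingHom.id_apply, mul_assoc]

@[simp] lemma lmulHom_apply (p x : R) : lmulHom p x = p * x := rfl

/-- Every proper right ideal is contained in a maximal one. -/
lemma exists_coatom_ge {K : Submodule Rᵐᵒᵖ R} (hK : K ≠ ⊤) :
    ∃ N : Submodule Rᵐᵒᵖ R, IsCoatom N ∧ K ≤ N := by
  have htop : (⊤ : Submodule Rᵐᵒᵖ R) = Submodule.span Rᵐᵒᵖ ({1} : Set R) := by
    refine le_antisymm (fun x _ => ?_) le_top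
    have : (op x : Rᵐᵒᵖ) • (1 : R) = x := by simp [op_smul_eq_mul]
    exact Submodule.mem_span_singleton.2 ⟨op x, this⟩
  have : IsCoatomic (Submodule Rᵐᵒᵖ R) := by
    apply CompleteLattice.coatomic_of_top_compact
    rw [htop]
    exact Submodule.singleton_span_isCompactElement 1
  exact (eq_top_or_exists_le_coatom K).resolve_left hK

/-- Construct a homomorphism on `vR` sending `v*x` to `u*x`, given the annihilator condition. -/
lemma exists_hom_span {u v : R} (h : ∀ x : R, v * x = 0 → u * x = 0) :
    ∃ f : (Submodule.span Rᵐᵒᵖ ({v} : Set R)) →ₗ[Rᵐᵒᵖ] R,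
      ∀ (x : R) (hx : v * x ∈ Submodule.span Rᵐᵒᵖ ({v} : Set R)), f ⟨v * x, hx⟩ = u * x := by
  have hmem : ∀ z : Submodule.span Rᵐᵒᵖ ({v} : Set R), ∃ x : R, v * x = (z : R) := by
    intro z
    rcases Submodule.mem_span_singleton.1 z.2 with ⟨a, ha⟩
    exact ⟨unop a, by simpa [MulOpposite.smul_eq_mul_unop] using ha⟩
  choose pick hpick using hmem
  have key : ∀ (z : Submodule.span Rᵐᵒᵖ ({v} : Set R)) (x : R),
      v * x = (z : R) → u * x = u * pick z := by
    intro z x hx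
    have hv : v * (x - pick z) = 0 := by rw [mul_sub, hx, hpick z, sub_self]
    have hu := h _ hv
    rw [mul_sub, sub_eq_zero] at hu
    exact hu
  refine ⟨{ toFun := fun z => u * pick z
            map_add' := by
              intro z z'
              show u * pick (z + z') = u * pick z + u * pick z'
              have hv : v * (pick z + pick z') = ((z + z' : _) : R) := by
                rw [mul_add, hpick z, hpick z']; rfl
              rw [← key _ _ hv, mul_add]
            map_smul' := by
              intro r z
              show u * pick (r • z) = (RingHom.id Rᵐᵒᵖ) r • (u * pick z)
              have hv : v * (pick z * unop r) = ((r • z : _) : R) := by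
                rw [← mul_assoc, hpick z]
                rfl
              rw [← key _ _ hv, ← mul_assoc]
              rfl }, ?_⟩
  intro x hx
  exact (key ⟨v * x, hx⟩ x rfl).symm

/-- Homomorphisms from a minimal right ideal into `R` extend to `R`, when `R` is right small
injective: the ideal is either small or a direct summand. -/
lemma extend_of_atom (h : SmallInjective R R) {A : Submodule Rᵐᵒᵖ R} (hA : IsAtom A)
    (f : A →ₗ[Rᵐᵒᵖ] R) : ∃ g : R →ₗ[Rᵐᵒᵖ] R, ∀ x : A, g x = f x := by
  by_cases hs : IsSmallRightIdeal A
  · exact h A hs f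
  · obtain ⟨K, hK1, hK2⟩ : ∃ K : Submodule Rᵐᵒᵖ R, A ⊔ K = ⊤ ∧ K ≠ ⊤ := by
      simpa [IsSmallRightIdeal, not_forall] using hs
    obtain ⟨N, hN, hKN⟩ := exists_coatom_ge hK2
    have hAN : A ⊔ N = ⊤ := by
      refine le_antisymm le_top ?_
      rw [← hK1]
      exact sup_le_sup_left hKN _
    have hANbot : A ⊓ N = ⊥ := by
      have hle : A ⊓ N ≤ A := inf_le_left
      rcases hle.lt_or_eq with hlt | he
      · exact hA.2 _ hlt
      · exfalso
        have hAle : A ≤ N := he ▸ inf_le_right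
        rw [sup_eq_right.2 hAle] at hAN
        exact hN.1 hAN
    obtain ⟨p, hp, q, hq, hpq⟩ := Submodule.mem_sup.1 (hAN ▸ Submodule.mem_top (x := (1 : R)))
    have hfix : ∀ x ∈ A, p * x = x := by
      intro x hx
      have h1 : p * x ∈ A := A.smul_mem (op x) hp
      have h2 : x - p * x ∈ A := sub_mem hx h1
      have h3 : x - p * x = q * x := by
        have h5 := congrArg (fun t : R => t * x) hpq
        simp only [add_mul, one_mul] at h5
        exact (eq_sub_of_add_eq' h5).symm
      have h4 : x - p * x ∈ N := by rw [h3]; exact N.smul_mem (op x) hq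
      have : x - p * x ∈ A ⊓ N := ⟨h2, h4⟩
      rw [hANbot, Submodule.mem_bot, sub_eq_zero] at this
      exact this.symm
    refine ⟨f ∘ₗ LinearMap.codRestrict A (lmulHom p) (fun x => A.smul_mem (op x) hp), ?_⟩
    intro x
    have hx : (LinearMap.codRestrict A (lmulHom p) (fun y => A.smul_mem (op y) hp)) (x : R)
        = x := Subtype.ext (hfix x x.2)
    simp only [LinearMap.comp_apply, hx]

/-- In a right Kasch ring, every maximal right ideal is the right annihilator of an element. -/
lemma kasch_coatom (hka : RightKasch R) {M : Submodule Rᵐᵒᵖ R} (hM : IsCoatom M) :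
    ∃ u : R, u ≠ 0 ∧ ∀ x : R, u * x = 0 ↔ x ∈ M := by
  have hsimple : IsSimpleModule Rᵐᵒᵖ (R ⧸ M) := (isSimpleModule_iff_isCoatom).2 hM
  obtain ⟨φ, hφ⟩ := hka (R ⧸ M) hsimple
  have hone : (Submodule.Quotient.mk (1 : R) : R ⧸ M) ≠ 0 := by
    rw [Ne, Submodule.Quotient.mk_eq_zero]
    intro h1
    apply hM.1
    refine le_antisymm le_top (fun x _ => ?_)
    have : (op x : Rᵐᵒᵖ) • (1 : R) ∈ M := M.smul_mem _ h1
    simpa [op_smul_eq_mul] using this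
  have hmk : ∀ x : R, φ (Submodule.Quotient.mk x) = φ (Submodule.Quotient.mk 1) * x := by
    intro x
    have : (Submodule.Quotient.mk x : R ⧸ M) = (op x : Rᵐᵒᵖ) • Submodule.Quotient.mk 1 := by
      rw [← Submodule.Quotient.mk_smul]
      congr 1
      simp [op_smul_eq_mul]
    rw [this, map_smul, op_smul_eq_mul]
  refine ⟨φ (Submodule.Quotient.mk 1), fun h0 => hone (hφ (by rw [h0, map_zero])), fun x => ?_⟩
  rw [← hmk x]
  constructor
  · intro hx
    have h0 : (Submodule.Quotient.mk x : R ⧸ M) = 0 := by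
      apply hφ
      rw [hx, map_zero]
    exact (Submodule.Quotient.mk_eq_zero M).1 h0
  · intro hx
    have : (Submodule.Quotient.mk x : R ⧸ M) = 0 := (Submodule.Quotient.mk_eq_zero M).2 hx
    rw [this, map_zero]

/-- An atom is the span of any of its nonzero elements. -/
lemma atom_eq_span {S : Type v} {M : Type w} [Ring S] [AddCommGroup M] [Module S M]
    {I : Submodule S M} (hI : IsAtom I) {y : M} (hy : y ∈ I) (h0 : y ≠ 0) :
    Submodule.span S ({y} : Set M) = I := by
  have hle : Submodule.span S ({y} : Set M) ≤ I := by
    rwa [Submodule.span_le, Set.singleton_subset_iff]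
  rcases hle.lt_or_eq with hlt | he
  · exact absurd (hI.2 _ hlt) (by simpa [Submodule.span_singleton_eq_bot] using h0)
  · exact he

lemma eq_top_of_one_mem {N : Submodule Rᵐᵒᵖ R} (h1 : (1 : R) ∈ N) : N = ⊤ := by
  refine le_antisymm le_top (fun z _ => ?_)
  simpa [op_smul_eq_mul] using N.smul_mem (op z) h1

/-- If `r ∉ M` for a maximal right ideal `M`, then `1 = m + r*s`. -/
lemma coatom_sup {M : Submodule Rᵐᵒᵖ R} (hM : IsCoatom M) {r : R} (hr : r ∉ M) :
    ∃ m ∈ M, ∃ s : R, m + r * s = 1 := by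
  have hsup : M ⊔ Submodule.span Rᵐᵒᵖ ({r} : Set R) = ⊤ := by
    refine hM.2 _ (lt_of_le_of_ne le_sup_left ?_)
    intro he
    apply hr
    have : r ∈ M ⊔ Submodule.span Rᵐᵒᵖ ({r} : Set R) :=
      (le_sup_right : _ ≤ M ⊔ Submodule.span Rᵐᵒᵖ ({r} : Set R))
        (Submodule.mem_span_singleton_self r)
    rwa [← he] at this
  obtain ⟨m, hm, y, hy, hmy⟩ := Submodule.mem_sup.1 (hsup ▸ Submodule.mem_top (x := (1 : R)))
  obtain ⟨a, ha⟩ := Submodule.mem_span_singleton.1 hy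
  exact ⟨m, hm, unop a, by rw [show r * unop a = y from ha, hmy]⟩

/-- Right small injective: if `kR` is a minimal right ideal, then `Rk` is a minimal left
ideal. -/
lemma dirA (h : SmallInjective R R) {k : R}
    (hka : IsAtom (Submodule.span Rᵐᵒᵖ ({k} : Set R))) :
    IsAtom (Submodule.span R ({k} : Set R)) := by
  obtain ⟨h0, hmin⟩ := rAtom_iff.1 hka
  refine lAtom_iff.2 ⟨h0, fun a ha => ?_⟩
  have hak : IsAtom (Submodule.span Rᵐᵒᵖ ({a * k} : Set R)) := by
    refine rAtom_iff.2 ⟨ha, fun r hr => ?_⟩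
    have hkr : k * r ≠ 0 := by
      intro hz
      apply hr
      rw [mul_assoc, hz, mul_zero]
    obtain ⟨s, hs⟩ := hmin r hkr
    refine ⟨s, ?_⟩
    calc a * k * r * s = a * (k * r * s) := by simp only [mul_assoc]
      _ = a * k := by rw [hs]
  have hker : ∀ x : R, (a * k) * x = 0 → k * x = 0 := by
    intro x hx
    by_contra hkx
    obtain ⟨s, hs⟩ := hmin x hkx
    apply ha
    calc a * k = a * (k * x * s) := by rw [hs]
      _ = (a * k * x) * s := by simp only [mul_assoc]
      _ = 0 := by rw [hx, zero_mul]
  obtain ⟨f, hf⟩ := exists_hom_span hker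
  obtain ⟨g, hg⟩ := extend_of_atom h hak f
  have hmem : a * k ∈ Submodule.span Rᵐᵒᵖ ({a * k} : Set R) :=
    Submodule.mem_span_singleton_self _
  have hmem1 : (a * k) * 1 ∈ Submodule.span Rᵐᵒᵖ ({a * k} : Set R) := by rwa [mul_one]
  have h1 : g (a * k) = k := by
    have e1 : (⟨(a * k) * 1, hmem1⟩ : Submodule.span Rᵐᵒᵖ ({a * k} : Set R)) = ⟨a * k, hmem⟩ :=
      Subtype.ext (mul_one _)
    have h2 := hf 1 hmem1
    rw [e1] at h2
    rw [show g (a * k) = g ((⟨a * k, hmem⟩ : Submodule.span Rᵐᵒᵖ ({a * k} : Set R)) : R) from rfl,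
      hg ⟨a * k, hmem⟩, h2, mul_one]
  have h2 : g (a * k) = g 1 * (a * k) := by
    conv_lhs => rw [show (a * k : R) = (op (a * k) : Rᵐᵒᵖ) • (1 : R) by
      simp [op_smul_eq_mul]]
    rw [map_smul, op_smul_eq_mul]
  exact ⟨g 1, by rw [← h2, h1]⟩

/-- Right small injective and right Kasch: if `Rk` is a minimal left ideal, then `kR` is a
minimal right ideal. -/
lemma dirB (h : SmallInjective R R) (hka : RightKasch R) {k : R}
    (hkat : IsAtom (Submodule.span R ({k} : Set R))) :
    IsAtom (Submodule.span Rᵐᵒᵖ ({k} : Set R)) := by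
  obtain ⟨h0, hmin⟩ := lAtom_iff.1 hkat
  -- It suffices to find a maximal right ideal equal to the right annihilator of `k`.
  suffices hM : ∃ M : Submodule Rᵐᵒᵖ R, IsCoatom M ∧ ∀ x : R, x ∈ M ↔ k * x = 0 by
    obtain ⟨M, hMc, hMr⟩ := hM
    refine rAtom_iff.2 ⟨h0, fun r hr => ?_⟩
    have hrM : r ∉ M := fun hm => hr ((hMr r).1 hm)
    obtain ⟨m, hm, s, hms⟩ := coatom_sup hMc hrM
    refine ⟨s, ?_⟩
    have hkm : k * m = 0 := (hMr m).1 hm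
    have : k * m + k * (r * s) = k := by rw [← mul_add, hms, mul_one]
    rw [hkm, zero_add] at this
    rw [mul_assoc]
    exact this
  by_cases hc : ∃ x : R, k * x * k ≠ 0
  · -- Case (kR)k ≠ 0 : produce an idempotent via Brauer's lemma.  Only Kasch is needed.
    obtain ⟨x, hx⟩ := hc
    have hka0 : k * (x * k) ≠ 0 := by rwa [← mul_assoc]
    have haa : (x * k : R) ≠ 0 := by
      intro hz
      exact hka0 (by rw [hz, mul_zero])
    -- span of k*(x*k) equals span of k
    have hkxk_mem : k * x * k ∈ Submodule.span R ({k} : Set R) := by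
      have := Submodule.smul_mem (Submodule.span R ({k} : Set R)) (k * x)
        (Submodule.mem_span_singleton_self k)
      simpa [smul_eq_mul] using this
    have hspan1 : Submodule.span R ({k * x * k} : Set R) = Submodule.span R ({k} : Set R) :=
      atom_eq_span hkat hkxk_mem hx
    -- a := x*k lies in span{k*x*k}
    have hxk_mem : (x * k : R) ∈ Submodule.span R ({k * x * k} : Set R) := by
      rw [hspan1]
      simpa [smul_eq_mul] using Submodule.smul_mem (Submodule.span R ({k} : Set R)) x
        (Submodule.mem_span_singleton_self k)
    obtain ⟨e₂, he₂⟩ := Submodule.mem_span_singleton.1 hxk_mem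
    rw [smul_eq_mul] at he₂
    -- he₂ : e₂ * (k * x * k) = x * k
    set e : R := e₂ * k with he_def
    have hea : e * (x * k) = x * k := by
      rw [he_def, mul_assoc, ← mul_assoc k x k, he₂]
    -- annihilator step: d*k * (x*k) = 0 → d*k = 0
    have hann : ∀ d : R, d * k * (x * k) = 0 → d * k = 0 := by
      intro d hd
      by_contra hdk
      obtain ⟨b, hb⟩ := hmin d hdk
      apply hka0
      calc k * (x * k) = b * (d * k) * (x * k) := by rw [hb]
        _ = b * (d * k * (x * k)) := by simp only [mul_assoc]
        _ = 0 := by rw [hd, mul_zero]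
    -- e is idempotent
    have hee : e * e = e := by
      have hd : (e * e₂ - e₂) * k * (x * k) = 0 := by
        have : (e * e₂ - e₂) * k = e * e - e := by
          rw [sub_mul, he_def]; simp only [mul_assoc]
        rw [this, sub_mul, mul_assoc, hea, hea]
        rw [sub_self]
      have := hann _ hd
      have h5 : (e * e₂ - e₂) * k = e * e - e := by
        rw [sub_mul, he_def]; simp only [mul_assoc]
      rw [h5] at this
      rwa [sub_eq_zero] at this
    have he0 : e ≠ 0 := by
      intro hz
      apply haa
      rw [← hea, hz, zero_mul]
    -- span{e} = span{k}
    have he_mem : e ∈ Submodule.span R ({k} : Set R) := by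
      simpa [he_def, smul_eq_mul] using Submodule.smul_mem (Submodule.span R ({k} : Set R)) e₂
        (Submodule.mem_span_singleton_self k)
    have hspan2 : Submodule.span R ({e} : Set R) = Submodule.span R ({k} : Set R) :=
      atom_eq_span hkat he_mem he0
    obtain ⟨d', hd'⟩ := Submodule.mem_span_singleton.1
      (show k ∈ Submodule.span R ({e} : Set R) by
        rw [hspan2]; exact Submodule.mem_span_singleton_self k)
    rw [smul_eq_mul] at hd'
    -- hd' : d' * e = k
    have hke : k * e = k := by rw [← hd', mul_assoc, hee]
    have hre : ∀ y : R, k * y = 0 ↔ e * y = 0 := by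
      intro y
      constructor
      · intro hy
        rw [he_def, mul_assoc, hy, mul_zero]
      · intro hy
        rw [← hd', mul_assoc, hy, mul_zero]
    -- maximal right ideal above the right annihilator of e
    have hker_ne : LinearMap.ker (lmulHom e) ≠ ⊤ := by
      intro ht
      apply he0
      have : (1 : R) ∈ LinearMap.ker (lmulHom e) := ht ▸ Submodule.mem_top
      simpa using this
    obtain ⟨M, hMc, hMker⟩ := exists_coatom_ge hker_ne
    obtain ⟨u, hu0, hU⟩ := kasch_coatom hka hMc
    have h1e : (1 : R) - e ∈ M := by
      apply hMker
      show e * (1 - e) = 0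
      rw [mul_sub, mul_one, hee, sub_self]
    have hue : u * e = u := by
      have := (hU (1 - e)).2 h1e
      rw [mul_sub, mul_one, sub_eq_zero] at this
      exact this.symm
    have hue0 : u * e ≠ 0 := by rwa [hue]
    -- use that span{e} is an atom
    have hatom_e : IsAtom (Submodule.span R ({e} : Set R)) := by rw [hspan2]; exact hkat
    obtain ⟨_, hminE⟩ := lAtom_iff.1 hatom_e
    obtain ⟨b, hb⟩ := hminE u hue0
    -- v := b*u kills M and fixes e
    have hve : (b * u) * e = e := by rw [mul_assoc]; exact hb
    have hvM : ∀ m ∈ M, (b * u) * m = 0 := by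
      intro m hm
      rw [mul_assoc, (hU m).2 hm, mul_zero]
    -- M equals the right annihilator of e
    refine ⟨M, hMc, fun y => ?_⟩
    rw [hre y]
    constructor
    · intro hyM
      have h1y : (1 - e) * y ∈ M := by
        have := M.smul_mem (op y) h1e
        simpa [op_smul_eq_mul] using this
      have hey : e * y ∈ M := by
        have : e * y = y - (1 - e) * y := by
          rw [sub_mul, one_mul]
          abel
        rw [this]
        exact sub_mem hyM h1y
      have : e * y = (b * u) * (e * y) := by rw [← mul_assoc, hve]
      rw [this, hvM _ hey]
    · intro hy
      exact hMker (show e * y = 0 from hy)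
  · -- Case (kR)k = 0 : then kR is small; use small injectivity and Kasch.
    push_neg at hc
    have hsmall : IsSmallRightIdeal (Submodule.span Rᵐᵒᵖ ({k} : Set R)) := by
      intro K hsupK
      by_contra hKne
      obtain ⟨N, hN, hKN⟩ := exists_coatom_ge hKne
      have hkN : k ∈ N := by
        by_contra hkN
        obtain ⟨n, hn, s, hns⟩ := coatom_sup hN hkN
        have hinv : n * (1 + k * s) = 1 := by
          have hn1 : n = 1 - k * s := by
            rw [← hns]; abel
          have hksks : (k * s) * (k * s) = 0 := by
            rw [show (k * s) * (k * s) = (k * s * k) * s by simp only [mul_assoc], hc s,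
              zero_mul]
          rw [hn1, sub_mul, one_mul, mul_add, mul_one, hksks, add_zero,
            add_sub_cancel_right]
        have h1N : (1 : R) ∈ N := by
          have := N.smul_mem (op (1 + k * s)) hn
          rwa [op_smul_eq_mul, hinv] at this
        exact hN.1 (eq_top_of_one_mem h1N)
      have htople : (⊤ : Submodule Rᵐᵒᵖ R) ≤ N := by
        rw [← hsupK]
        exact sup_le (by rwa [Submodule.span_le, Set.singleton_subset_iff]) hKN
      exact hN.1 (top_unique htople)
    have hker_ne : LinearMap.ker (lmulHom k) ≠ ⊤ := by
      intro ht
      apply h0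
      have : (1 : R) ∈ LinearMap.ker (lmulHom k) := ht ▸ Submodule.mem_top
      simpa using this
    obtain ⟨M, hMc, hMker⟩ := exists_coatom_ge hker_ne
    obtain ⟨u, hu0, hU⟩ := kasch_coatom hka hMc
    have hcond : ∀ x : R, k * x = 0 → u * x = 0 := by
      intro x hx
      exact (hU x).2 (hMker (show k * x = 0 from hx))
    obtain ⟨f, hf⟩ := exists_hom_span hcond
    obtain ⟨g, hg⟩ := h _ hsmall f
    have hmem : k ∈ Submodule.span Rᵐᵒᵖ ({k} : Set R) := Submodule.mem_span_singleton_self k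
    have hmem1 : k * 1 ∈ Submodule.span Rᵐᵒᵖ ({k} : Set R) := by rwa [mul_one]
    have h1 : g k = u := by
      have e1 : (⟨k * 1, hmem1⟩ : Submodule.span Rᵐᵒᵖ ({k} : Set R)) = ⟨k, hmem⟩ :=
        Subtype.ext (mul_one _)
      have h2 := hf 1 hmem1
      rw [e1] at h2
      rw [show g k = g ((⟨k, hmem⟩ : Submodule.span Rᵐᵒᵖ ({k} : Set R)) : R) from rfl,
        hg ⟨k, hmem⟩, h2, mul_one]
    have h2 : g k = g 1 * k := by
      conv_lhs => rw [show (k : R) = (op k : Rᵐᵒᵖ) • (1 : R) by simp [op_smul_eq_mul]]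
      rw [map_smul, op_smul_eq_mul]
    have hck : g 1 * k ≠ 0 := by rw [← h2, h1]; exact hu0
    obtain ⟨d, hd⟩ := hmin (g 1) hck
    have hdu : d * u = k := by rw [← h1, h2]; exact hd
    refine ⟨M, hMc, fun y => ?_⟩
    constructor
    · intro hyM
      have huy : u * y = 0 := (hU y).2 hyM
      rw [← hdu, mul_assoc, huy, mul_zero]
    · intro hy
      exact hMker (show k * y = 0 from hy)

end Aux

theorem stmt_11 {R : Type u} [Ring R] (h : SmallInjective R R) (hk : RightKasch R) :
    (∀ k : R, IsAtom (Submodule.span R ({k} : Set R)) ↔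
      IsAtom (Submodule.span Rᵐᵒᵖ ({k} : Set R))) ∧
    ((sSup {I : Submodule R R | IsAtom I} : Submodule R R) : Set R) =
      ((sSup {I : Submodule Rᵐᵒᵖ R | IsAtom I} : Submodule Rᵐᵒᵖ R) : Set R) := by
  have iffk : ∀ k : R, IsAtom (Submodule.span R ({k} : Set R)) ↔
      IsAtom (Submodule.span Rᵐᵒᵖ ({k} : Set R)) := fun k => ⟨dirB h hk, dirA h⟩
  refine ⟨iffk, ?_⟩
  ext x
  simp only [SetLike.mem_coe]
  constructor
  · intro hx
    rw [sSup_eq_iSup'] at hx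
    refine Submodule.iSup_induction
      (motive := fun z => z ∈ (sSup {I : Submodule Rᵐᵒᵖ R | IsAtom I} : Submodule Rᵐᵒᵖ R))
      _ hx (fun I y hy => ?_) (Submodule.zero_mem _)
      (fun a b ha hb => Submodule.add_mem _ ha hb)
    by_cases hy0 : y = 0
    · rw [hy0]; exact Submodule.zero_mem _
    · have hsp : Submodule.span R ({y} : Set R) = (I : Submodule R R) :=
        atom_eq_span I.2 hy hy0
      have hat : IsAtom (Submodule.span Rᵐᵒᵖ ({y} : Set R)) :=
        (iffk y).1 (by rw [hsp]; exact I.2)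
      exact le_sSup (show Submodule.span Rᵐᵒᵖ ({y} : Set R) ∈
        {I : Submodule Rᵐᵒᵖ R | IsAtom I} from hat) (Submodule.mem_span_singleton_self y)
  · intro hx
    rw [sSup_eq_iSup'] at hx
    refine Submodule.iSup_induction
      (motive := fun z => z ∈ (sSup {I : Submodule R R | IsAtom I} : Submodule R R))
      _ hx (fun I y hy => ?_) (Submodule.zero_mem _)
      (fun a b ha hb => Submodule.add_mem _ ha hb)
    by_cases hy0 : y = 0
    · rw [hy0]; exact Submodule.zero_mem _
    · have hsp : Submodule.span Rᵐᵒᵖ ({y} : Set R) = (I : Submodule Rᵐᵒᵖ R) :=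
        atom_eq_span I.2 hy hy0
      have hat : IsAtom (Submodule.span R ({y} : Set R)) :=
        (iffk y).2 (by rw [hsp]; exact I.2)
      exact le_sSup (show Submodule.span R ({y} : Set R) ∈
        {I : Submodule R R | IsAtom I} from hat) (Submodule.mem_span_singleton_self y)
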